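/- Let n ≥ 2, k > 0 and for each i let p_i > 0, q_i − p_i > 0, η_i > 0, ζ_i ≥ 0. With β_{ζ,k}^{(p,q)}(φ; η) as above and β_k(φ) the plain beta k-integral over the simplex, one has β_{ζ,k}^{(p,q)}(φ; η) ≤ β_k(φ) · ∏_{i=1}^n e^{−η_i^k/k} ₁F_{1,k}(q_i − p_i; q_i; η_i^k/k + ζ_i^k/η_i^k). -/

import Mathlib

open MeasureTheory Real Set

noncomputable section

set_option maxHeartbeats 1000000


/-- Open standard (n-1)-simplex in ℝ^{n-1}. -/
def simplexInt (n : ℕ) : Set (Fin (n-1) → ℝ) :=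
  {t | (∀ i, 0 < t i) ∧ ∑ i, t i < 1}

/-- Barycentric coordinates: `t_1, …, t_{n-1}` and `t_n = 1 - ∑_{i<n} t_i`. -/
def bary (n : ℕ) (t : Fin (n-1) → ℝ) (i : Fin n) : ℝ :=
  if h : (i : ℕ) < n - 1 then t ⟨i, h⟩ else 1 - ∑ j, t j

/-- Product of the n barycentric coordinates. -/
def piT (n : ℕ) (t : Fin (n-1) → ℝ) : ℝ := ∏ i : Fin n, bary n t i

/-- Euler-integral confluent hypergeometric k-function ₁F_{1,k}(a;b;l). -/
def F1k (k a b l : ℝ) : ℝ :=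
  (1/k) * (Real.Gamma b / (Real.Gamma a * Real.Gamma (b-a))) *
    ∫ u in Set.Ioo (0:ℝ) 1, u ^ (a/k - 1) * (1-u) ^ ((b-a)/k - 1) * Real.exp (l*u)

/-- Beta k-function of n variables. -/
def betaK (n : ℕ) (k : ℝ) (φ : Fin n → ℝ) : ℝ :=
  (1/k^(n-1)) * ∫ t in simplexInt n, ∏ i, bary n t i ^ (φ i / k - 1)

/-- Extended beta k-function β_k(φ; η). -/
def betaKe (n : ℕ) (k : ℝ) (φ : Fin n → ℝ) (η : ℝ) : ℝ :=
  (1/k^(n-1)) * ∫ t in simplexInt n,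
    (∏ i, bary n t i ^ (φ i / k - 1)) * Real.exp (-(η^k)/(k * piT n t))

/-- Generalized beta k-function of the first kind. -/
def betaFirst (n : ℕ) (k a b η ζ : ℝ) (φ : Fin n → ℝ) : ℝ :=
  (1/k^(n-1)) * ∫ t in simplexInt n,
    (∏ i, bary n t i ^ (φ i / k - 1)) *
      F1k k a b (-(η^k)/(k * piT n t) - ζ^k * piT n t / η^k)

/-- Generalized beta k-function of the second kind. -/
def betaSecond (n : ℕ) (k : ℝ) (p q η ζ φ : Fin n → ℝ) : ℝ :=
  (1/k^(n-1)) * ∫ t in simplexInt n,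
    ∏ i, (bary n t i ^ (φ i / k - 1) *
      F1k k (p i) (q i) (-((η i)^k)/(k * bary n t i) - (ζ i)^k * bary n t i / (η i)^k))

/-- Extended beta k-function of the second kind (vector η). -/
def betaKe2 (n : ℕ) (k : ℝ) (φ η : Fin n → ℝ) : ℝ :=
  (1/k^(n-1)) * ∫ t in simplexInt n,
    ∏ i, (bary n t i ^ (φ i / k - 1) * Real.exp (-((η i)^k)/(k * bary n t i)))


section Aux
open ENNReal


lemma betaConv {p q : ℝ} (hp : 0 < p) (hq : 0 < q) :
    IntegrableOn (fun u : ℝ => u ^ (p - 1) * (1 - u) ^ (q - 1)) (Ioo 0 1) := by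
  have h1 : IntegrableOn (fun u : ℝ => u ^ (p - 1)) (Ioo (0:ℝ) (1/2)) := by
    have := (intervalIntegral.intervalIntegrable_rpow' (a := 0) (b := 1/2)
      (r := p - 1) (by linarith)).1
    exact this.mono_set Ioo_subset_Ioc_self
  have h2 : IntegrableOn (fun u : ℝ => (1 - u) ^ (q - 1)) (Ioo (1/2 : ℝ) 1) := by
    have h := (intervalIntegral.intervalIntegrable_rpow' (a := 0) (b := 1/2)
      (r := q - 1) (by linarith)).comp_sub_left 1
    norm_num at h
    exact h.2.mono_set Ioo_subset_Ioc_self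
  have hmeas : Measurable (fun u : ℝ => u ^ (p - 1) * (1 - u) ^ (q - 1)) := by
    fun_prop
  have hsplit : Ioo (0:ℝ) 1 ⊆ Ioo (0:ℝ) (1/2) ∪ Ioo (1/2 : ℝ) 1 ∪ {(1/2 : ℝ)} := by
    intro x hx
    rcases lt_trichotomy x (1/2) with h | h | h
    · exact Or.inl (Or.inl ⟨hx.1, h⟩)
    · exact Or.inr h
    · exact Or.inl (Or.inr ⟨h, hx.2⟩)
  refine IntegrableOn.mono_set ?_ hsplit
  refine IntegrableOn.union (IntegrableOn.union ?_ ?_) ?_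
  · -- bound by C * u^(p-1)
    refine Integrable.mono (g := fun u => ((1:ℝ) + (1/2 : ℝ) ^ (q-1)) * u ^ (p-1))
      (h1.const_mul _) hmeas.aestronglyMeasurable ?_
    filter_upwards [ae_restrict_mem measurableSet_Ioo] with u hu
    have hu0 : (0:ℝ) < u := hu.1
    have hu1 : (1:ℝ)/2 ≤ 1 - u := by linarith [hu.2]
    have h1u : (0:ℝ) < 1 - u := by linarith
    rw [Real.norm_eq_abs, Real.norm_eq_abs, abs_of_nonneg (by positivity),
      abs_of_nonneg (by positivity)]
    rw [mul_comm ((1:ℝ) + (1/2 : ℝ) ^ (q-1)) _]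
    apply mul_le_mul_of_nonneg_left _ (by positivity)
    rcases le_or_gt 1 q with hq1 | hq1
    · have : (1 - u) ^ (q-1) ≤ 1 := by
        apply Real.rpow_le_one (by linarith) (by linarith) (by linarith)
      nlinarith [Real.rpow_nonneg (le_of_lt (by norm_num : (0:ℝ) < 1/2)) (q-1)]
    · have : (1 - u) ^ (q-1) ≤ (1/2 : ℝ) ^ (q-1) := by
        apply Real.rpow_le_rpow_of_nonpos (by norm_num) hu1 (by linarith)
      nlinarith
  · refine Integrable.mono (g := fun u => ((1:ℝ) + (1/2 : ℝ) ^ (p-1)) * (1-u) ^ (q-1))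
      (h2.const_mul _) hmeas.aestronglyMeasurable ?_
    filter_upwards [ae_restrict_mem measurableSet_Ioo] with u hu
    have hu0 : (1:ℝ)/2 ≤ u := le_of_lt hu.1
    have h1u : (0:ℝ) < 1 - u := by linarith [hu.2]
    have hu0' : (0:ℝ) < u := by linarith
    rw [Real.norm_eq_abs, Real.norm_eq_abs, abs_of_nonneg (by positivity),
      abs_of_nonneg (by positivity)]
    rw [mul_comm ((1:ℝ) + (1/2 : ℝ) ^ (p-1)) _, mul_comm (u ^ (p-1)) _]
    apply mul_le_mul_of_nonneg_left _ (by positivity)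
    rcases le_or_gt 1 p with hp1 | hp1
    · have : u ^ (p-1) ≤ 1 := by
        apply Real.rpow_le_one (by linarith) (by linarith [hu.2]) (by linarith)
      nlinarith [Real.rpow_nonneg (le_of_lt (by norm_num : (0:ℝ) < 1/2)) (p-1)]
    · have : u ^ (p-1) ≤ (1/2 : ℝ) ^ (p-1) := by
        apply Real.rpow_le_rpow_of_nonpos (by norm_num) hu0 (by linarith)
      nlinarith
  · exact (integrableOn_singleton_iff enorm_ne_top).2 (Or.inr (by simp))


lemma betaConvExp {p q m : ℝ} (hp : 0 < p) (hq : 0 < q) :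
    IntegrableOn (fun u : ℝ => u ^ (p - 1) * (1 - u) ^ (q - 1) * Real.exp (m * u)) (Ioo 0 1) := by
  have hmeas : Measurable (fun u : ℝ => u ^ (p - 1) * (1 - u) ^ (q - 1) * Real.exp (m * u)) := by
    fun_prop
  refine Integrable.mono (g := fun u => Real.exp |m| * (u ^ (p - 1) * (1 - u) ^ (q - 1)))
    ((betaConv hp hq).const_mul _) hmeas.aestronglyMeasurable ?_
  filter_upwards [ae_restrict_mem measurableSet_Ioo] with u hu
  have hu0 : (0:ℝ) < u := hu.1
  have h1u : (0:ℝ) < 1 - u := by linarith [hu.2]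
  rw [Real.norm_eq_abs, Real.norm_eq_abs, abs_of_nonneg (by positivity),
    abs_of_nonneg (by positivity), mul_comm (Real.exp |m|) _]
  apply mul_le_mul_of_nonneg_left _ (by positivity)
  apply Real.exp_le_exp.2
  calc m * u ≤ |m * u| := le_abs_self _
  _ = |m| * |u| := abs_mul _ _
  _ ≤ |m| * 1 := by
      apply mul_le_mul_of_nonneg_left _ (abs_nonneg m)
      rw [abs_of_nonneg hu0.le]; linarith [hu.2]
  _ = |m| := mul_one _

lemma F1k_nonneg {k a b : ℝ} (hk : 0 < k) (ha : 0 < a) (hba : 0 < b - a) (l : ℝ) :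
    0 ≤ F1k k a b l := by
  have hb : 0 < b := by linarith
  apply mul_nonneg
  · apply mul_nonneg (by positivity)
    have := Real.Gamma_pos_of_pos ha
    have := Real.Gamma_pos_of_pos hb
    have := Real.Gamma_pos_of_pos hba
    positivity
  · apply setIntegral_nonneg measurableSet_Ioo
    intro u hu
    have hu0 : (0:ℝ) < u := hu.1
    have h1u : (0:ℝ) < 1 - u := by linarith [hu.2]
    positivity

/-- Key pointwise bound (Kummer + monotonicity). -/
lemma F1k_bound {k a b x c m : ℝ} (hk : 0 < k) (ha : 0 < a) (hba : 0 < b - a)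
    (hc : 0 ≤ c) (hcx : c ≤ x) (hcm : c ≤ m) :
    F1k k a b (-x) ≤ Real.exp (-c) * F1k k (b - a) b m := by
  have hb : 0 < b := by linarith
  unfold F1k
  have hG : Real.Gamma b / (Real.Gamma (b-a) * Real.Gamma (b - (b-a))) =
      Real.Gamma b / (Real.Gamma a * Real.Gamma (b-a)) := by
    rw [show b - (b - a) = a by ring, mul_comm]
  rw [hG]
  rw [show Real.exp (-c) * ((1/k) * (Real.Gamma b / (Real.Gamma a * Real.Gamma (b-a))) *
      ∫ u in Set.Ioo (0:ℝ) 1, u ^ ((b-a)/k - 1) * (1-u) ^ ((b-(b-a))/k - 1) * Real.exp (m*u)) =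
    (1/k) * (Real.Gamma b / (Real.Gamma a * Real.Gamma (b-a))) *
      (Real.exp (-c) * ∫ u in Set.Ioo (0:ℝ) 1, u ^ ((b-a)/k - 1) * (1-u) ^ ((b-(b-a))/k - 1) *
        Real.exp (m*u)) by ring]
  have hGpos : 0 < (1/k) * (Real.Gamma b / (Real.Gamma a * Real.Gamma (b-a))) := by
    have := Real.Gamma_pos_of_pos ha
    have := Real.Gamma_pos_of_pos hb
    have := Real.Gamma_pos_of_pos hba
    positivity
  apply mul_le_mul_of_nonneg_left _ hGpos.le
  -- substitution u ↦ 1 - u on the LHS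
  have hsub : ∫ u in Set.Ioo (0:ℝ) 1, u ^ (a/k - 1) * (1-u) ^ ((b-a)/k - 1) * Real.exp (-x*u) =
      ∫ u in Set.Ioo (0:ℝ) 1, (1-u) ^ (a/k - 1) * u ^ ((b-a)/k - 1) * Real.exp (-x*(1-u)) := by
    rw [← MeasureTheory.integral_Ioc_eq_integral_Ioo, ← MeasureTheory.integral_Ioc_eq_integral_Ioo,
      ← intervalIntegral.integral_of_le (by norm_num : (0:ℝ) ≤ 1),
      ← intervalIntegral.integral_of_le (by norm_num : (0:ℝ) ≤ 1)]
    have := intervalIntegral.integral_comp_sub_left (a := (0:ℝ)) (b := (1:ℝ))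
      (f := fun u : ℝ => u ^ (a/k - 1) * (1-u) ^ ((b-a)/k - 1) * Real.exp (-x*u)) 1
    simp only [sub_zero, sub_self] at this
    rw [← this]
    congr 1
    ext u
    ring_nf
  rw [hsub]
  rw [← integral_const_mul]
  apply integral_mono_of_nonneg (μ := volume.restrict (Ioo (0:ℝ) 1))
  · filter_upwards [ae_restrict_mem measurableSet_Ioo] with u hu
    have hu0 : (0:ℝ) < u := hu.1
    have h1u : (0:ℝ) < 1 - u := by linarith [hu.2]
    positivity
  · have : IntegrableOn (fun u : ℝ =>
        u ^ ((b-a)/k - 1) * (1-u) ^ (a/k - 1) * Real.exp (m * u)) (Ioo 0 1) :=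
      betaConvExp (by positivity) (by positivity)
    refine MeasureTheory.IntegrableOn.congr_fun (this.const_mul (Real.exp (-c))) ?_ measurableSet_Ioo
    intro u _
    rw [show b - (b - a) = a by ring]
  · filter_upwards [ae_restrict_mem measurableSet_Ioo] with u hu
    have hu0 : (0:ℝ) < u := hu.1
    have h1u : (0:ℝ) < 1 - u := by linarith [hu.2]
    rw [show b - (b - a) = a by ring]
    have key : Real.exp (-x*(1-u)) ≤ Real.exp (-c) * Real.exp (m * u) := by
      rw [← Real.exp_add]
      apply Real.exp_le_exp.2
      nlinarith
    calc (1-u) ^ (a/k - 1) * u ^ ((b-a)/k - 1) * Real.exp (-x*(1-u))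
        ≤ (1-u) ^ (a/k - 1) * u ^ ((b-a)/k - 1) * (Real.exp (-c) * Real.exp (m * u)) := by
          apply mul_le_mul_of_nonneg_left key (by positivity)
      _ = Real.exp (-c) * (u ^ ((b-a)/k - 1) * (1-u) ^ (a/k - 1) * Real.exp (m*u)) := by ring


def Sx (m : ℕ) (c : ℝ) : Set (Fin m → ℝ) := {t | (∀ i, 0 < t i) ∧ ∑ i, t i < c}

lemma measurableSet_Sx (m : ℕ) (c : ℝ) : MeasurableSet (Sx m c) := by
  have : Sx m c = (⋂ i, {t : Fin m → ℝ | 0 < t i}) ∩ {t | ∑ i, t i < c} := by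
    ext t; simp [Sx]
  rw [this]
  exact (MeasurableSet.iInter fun i =>
      measurableSet_lt measurable_const (measurable_pi_apply i)).inter
    (measurableSet_lt (Finset.measurable_sum _ fun i _ => measurable_pi_apply i) measurable_const)


lemma lintegral_Ioo_scale {F : ℝ → ℝ≥0∞} (hF : Measurable F) {M : ℝ} (hM : 0 < M) :
    ∫⁻ x in Ioo 0 M, F x = ENNReal.ofReal M * ∫⁻ u in Ioo (0:ℝ) 1, F (M * u) := by
  have h1 : ∫⁻ x in Ioo 0 M, F x = ∫⁻ x, (Ioo 0 M).indicator F x := by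
    rw [lintegral_indicator measurableSet_Ioo]
  have h2 : volume = ENNReal.ofReal |M| • Measure.map (M * ·) volume :=
    (Real.smul_map_volume_mul_left (ne_of_gt hM)).symm
  rw [h1]
  conv_lhs => rw [h2]
  rw [lintegral_smul_measure, lintegral_map (hF.indicator measurableSet_Ioo)
    (measurable_const_mul M), abs_of_pos hM]
  congr 1
  rw [← lintegral_indicator (measurableSet_Ioo (a := (0:ℝ)) (b := (1:ℝ)))]
  congr 1
  funext u
  by_cases hu : u ∈ Ioo (0:ℝ) 1
  · rw [indicator_of_mem hu, indicator_of_mem]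
    exact ⟨mul_pos hM hu.1, by nlinarith [hu.2]⟩
  · rw [indicator_of_notMem hu, indicator_of_notMem]
    intro hmem
    exact hu ⟨by nlinarith [hmem.1], by nlinarith [hmem.2]⟩

lemma scaleBeta {α b M P : ℝ} (hα : 0 < α) (hb : 0 < b) (hM : 0 < M) (hP : 0 ≤ P) :
    ∫⁻ x in Ioo 0 M, ENNReal.ofReal (P * x ^ (α-1) * (M-x) ^ (b-1)) =
      ENNReal.ofReal (P * M ^ (α+b-1)) *
        ∫⁻ u in Ioo (0:ℝ) 1, ENNReal.ofReal (u ^ (α-1) * (1-u) ^ (b-1)) := by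
  have hFm : Measurable fun x : ℝ => ENNReal.ofReal (P * x ^ (α-1) * (M-x) ^ (b-1)) := by
    apply Measurable.ennreal_ofReal
    fun_prop
  rw [lintegral_Ioo_scale hFm hM]
  have : ∫⁻ u in Ioo (0:ℝ) 1, ENNReal.ofReal (P * (M*u) ^ (α-1) * (M-M*u) ^ (b-1)) =
      ∫⁻ u in Ioo (0:ℝ) 1, ENNReal.ofReal (P * M ^ (α+b-2)) *
        ENNReal.ofReal (u ^ (α-1) * (1-u) ^ (b-1)) := by
    apply setLIntegral_congr_fun measurableSet_Ioo
    intro u hu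
    have hu0 : 0 < u := hu.1
    have hu1 : 0 < 1 - u := by linarith [hu.2]
    beta_reduce
    rw [← ENNReal.ofReal_mul (by positivity)]
    congr 1
    rw [show M - M*u = M * (1-u) by ring, Real.mul_rpow hM.le hu0.le,
      Real.mul_rpow hM.le hu1.le,
      show α + b - 2 = (α - 1) + (b - 1) by ring, Real.rpow_add hM]
    ring
  rw [this, lintegral_const_mul' _ _ ENNReal.ofReal_ne_top, ← mul_assoc,
    ← ENNReal.ofReal_mul (by positivity)]
  congr 2
  rw [show α + b - 1 = 1 + (α + b - 2) by ring, Real.rpow_add hM, Real.rpow_one]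
  ring

lemma dirichlet_bound : ∀ (m : ℕ) (a : Fin m → ℝ), (∀ i, 0 < a i) → ∀ (b : ℝ), 0 < b →
    ∃ C : ℝ≥0∞, C ≠ ⊤ ∧ ∀ c : ℝ, 0 < c →
      ∫⁻ t in Sx m c, ENNReal.ofReal ((∏ i, t i ^ (a i - 1)) * (c - ∑ i, t i) ^ (b - 1)) ≤
        ENNReal.ofReal (c ^ (∑ i, a i + b - 1)) * C := by
  intro m
  induction m with
  | zero =>
    intro a _ b hb
    refine ⟨1, one_ne_top, fun c hc => ?_⟩
    have hS : Sx 0 c = univ := by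
      ext t; simp [Sx, hc]
    have hvol : (volume : Measure (Fin 0 → ℝ)) univ = 1 := by
      rw [MeasureTheory.volume_pi, Measure.pi_univ]; simp
    rw [hS, Measure.restrict_univ]
    simp only [Finset.univ_eq_empty, Finset.prod_empty, Finset.sum_empty, one_mul, sub_zero,
      zero_add]
    rw [lintegral_const, hvol, mul_one]
  | succ m IH =>
    intro a ha b hb
    set α := a (Fin.last m) with hαdef
    have hα : 0 < α := ha _
    obtain ⟨C', hC', hIH⟩ := IH (fun j => a j.castSucc) (fun j => ha _) (α + b) (by linarith)
    set B := ∫⁻ u in Ioo (0:ℝ) 1, ENNReal.ofReal (u ^ (α-1) * (1-u) ^ (b-1)) with hBdef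
    have hB : B ≠ ⊤ := by
      have hint := betaConv hα hb
      have hae : 0 ≤ᵐ[volume.restrict (Ioo (0:ℝ) 1)]
          fun u : ℝ => u ^ (α - 1) * (1 - u) ^ (b - 1) := by
        filter_upwards [ae_restrict_mem measurableSet_Ioo] with u hu
        have h0 : (0:ℝ) < u := hu.1
        have h1 : (0:ℝ) < 1 - u := by linarith [hu.2]
        positivity
      have := (MeasureTheory.hasFiniteIntegral_iff_ofReal hae).1 hint.2
      exact this.ne
    refine ⟨C' * B, ENNReal.mul_ne_top hC' hB, fun c hc => ?_⟩
    set T : Set (ℝ × (Fin m → ℝ)) :=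
      {p | (0 < p.1 ∧ ∀ i, 0 < p.2 i) ∧ p.1 + ∑ i, p.2 i < c} with hTdef
    have hT : MeasurableSet T := by
      have : T = ({p : ℝ × (Fin m → ℝ) | 0 < p.1} ∩ ⋂ i, {p | 0 < p.2 i}) ∩
          {p | p.1 + ∑ i, p.2 i < c} := by
        ext p; simp [hTdef]
      rw [this]
      refine MeasurableSet.inter (MeasurableSet.inter ?_ ?_) ?_
      · exact measurableSet_lt measurable_const measurable_fst
      · exact MeasurableSet.iInter fun i => measurableSet_lt measurable_const
          (by fun_prop : Measurable fun p : ℝ × (Fin m → ℝ) => p.2 i)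
      · exact measurableSet_lt
          (by fun_prop : Measurable fun p : ℝ × (Fin m → ℝ) => p.1 + ∑ i, p.2 i)
          measurable_const
    set v : ℝ × (Fin m → ℝ) → ℝ≥0∞ := fun p =>
      ENNReal.ofReal ((∏ i, p.2 i ^ (a i.castSucc - 1)) * p.1 ^ (α - 1) *
        (c - p.1 - ∑ i, p.2 i) ^ (b - 1)) with hvdef
    have hv : Measurable v := by
      apply Measurable.ennreal_ofReal
      fun_prop
    have hg : Measurable (T.indicator v) := hv.indicator hT
    set e := MeasurableEquiv.piFinSuccAbove (fun _ : Fin (m+1) => ℝ) (Fin.last m) with hedef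
    have hmp : MeasurePreserving e volume volume :=
      volume_preserving_piFinSuccAbove (fun _ : Fin (m+1) => ℝ) (Fin.last m)
    set f : (Fin (m+1) → ℝ) → ℝ≥0∞ := fun t =>
      ENNReal.ofReal ((∏ i, t i ^ (a i - 1)) * (c - ∑ i, t i) ^ (b - 1)) with hfdef
    have key : ∀ t, (Sx (m+1) c).indicator f t = T.indicator v (e t) := by
      intro t
      have he : e t = (t (Fin.last m), fun j => t j.castSucc) := by
        show (Fin.insertNthEquiv (fun _ => ℝ) (Fin.last m)).symm t = _
        simp only [Equiv.symm, Fin.insertNthEquiv, Equiv.coe_fn_mk]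
        refine congrArg _ ?_
        funext j
        simp [Fin.removeNth, Fin.succAbove_last]
      rw [he]
      have hmem : t ∈ Sx (m+1) c ↔ ((t (Fin.last m), fun j => t j.castSucc) : ℝ × (Fin m → ℝ)) ∈ T := by
        simp only [Sx, hTdef, mem_setOf_eq]
        rw [Fin.forall_fin_succ' (P := fun i => 0 < t i), Fin.sum_univ_castSucc]
        constructor
        · rintro ⟨⟨h1, h2⟩, h3⟩
          exact ⟨⟨h2, h1⟩, by linarith⟩
        · rintro ⟨⟨h1, h2⟩, h3⟩
          exact ⟨⟨h2, h1⟩, by linarith⟩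
      by_cases ht : t ∈ Sx (m+1) c
      · rw [indicator_of_mem ht, indicator_of_mem (hmem.1 ht)]
        simp only [hfdef, hvdef]
        beta_reduce
        congr 1
        rw [Fin.prod_univ_castSucc (f := fun i => t i ^ (a i - 1)), Fin.sum_univ_castSucc,
          show c - (∑ j : Fin m, t (Fin.castSucc j) + t (Fin.last m)) =
            c - t (Fin.last m) - ∑ j : Fin m, t (Fin.castSucc j) from by ring]
      · rw [indicator_of_notMem ht, indicator_of_notMem (fun h => ht (hmem.2 h))]
    calc ∫⁻ t in Sx (m+1) c, f t
        = ∫⁻ t, (Sx (m+1) c).indicator f t := (lintegral_indicator (measurableSet_Sx _ _) f).symm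
      _ = ∫⁻ t, T.indicator v (e t) := by simp_rw [key]
      _ = ∫⁻ p, T.indicator v p := hmp.lintegral_comp hg
      _ = ∫⁻ y, ∫⁻ x, T.indicator v (x, y) := by
          rw [Measure.volume_eq_prod, lintegral_prod_symm _ hg.aemeasurable]
      _ = ∫⁻ y, ((Sx m c).indicator (fun y => ENNReal.ofReal
            ((∏ i, y i ^ (a (Fin.castSucc i) - 1)) * (c - ∑ i, y i) ^ ((α + b) - 1))) y) * B := by
          congr 1
          funext y
          by_cases hy : y ∈ Sx m c
          · set M := c - ∑ i, y i with hMdef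
            have hM : 0 < M := by simp only [hMdef]; linarith [hy.2]
            have hyi : ∀ i, 0 < y i := hy.1
            have hP : 0 ≤ ∏ i, y i ^ (a (Fin.castSucc i) - 1) :=
              Finset.prod_nonneg fun i _ => (Real.rpow_pos_of_pos (hyi i) _).le
            have hgx : ∀ x, T.indicator v (x, y) = (Ioo 0 M).indicator (fun x =>
                ENNReal.ofReal ((∏ i, y i ^ (a i.castSucc - 1)) * x ^ (α - 1) *
                  (M - x) ^ (b - 1))) x := by
              intro x
              by_cases hx : x ∈ Ioo 0 M
              · rw [indicator_of_mem, indicator_of_mem hx]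
                · simp only [hvdef]
                  beta_reduce
                  rw [show c - x - ∑ i, y i = M - x from by simp only [hMdef]; ring]
                · exact ⟨⟨hx.1, hyi⟩, by have := hx.2; simp only [hMdef] at this; linarith⟩
              · rw [indicator_of_notMem, indicator_of_notMem hx]
                rintro ⟨⟨hx1, -⟩, hx2⟩
                exact hx ⟨hx1, by simp only [hMdef]; linarith⟩
            rw [indicator_of_mem hy]
            simp_rw [hgx]
            rw [lintegral_indicator measurableSet_Ioo, scaleBeta hα hb hM hP, mul_comm]
          · rw [indicator_of_notMem hy, zero_mul]
            have : ∀ x, T.indicator v (x, y) = 0 := by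
              intro x
              rw [indicator_of_notMem]
              rintro ⟨⟨hx1, hy1⟩, hx2⟩
              exact hy ⟨hy1, by linarith⟩
            simp_rw [this, lintegral_zero]
      _ = (∫⁻ y in Sx m c, ENNReal.ofReal
            ((∏ i, y i ^ (a (Fin.castSucc i) - 1)) * (c - ∑ i, y i) ^ ((α + b) - 1))) * B := by
          rw [lintegral_mul_const' _ _ hB, lintegral_indicator (measurableSet_Sx _ _)]
      _ ≤ (ENNReal.ofReal (c ^ (∑ j, a (Fin.castSucc j) + (α + b) - 1)) * C') * B := by
          exact mul_le_mul_left (hIH c hc) B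
      _ = ENNReal.ofReal (c ^ (∑ i, a i + b - 1)) * (C' * B) := by
          rw [Fin.sum_univ_castSucc (f := fun i => a i)]
          ring_nf
          rw [hαdef]
          ring

end Aux

theorem stmt18 (n : ℕ) (hn : 2 ≤ n) (k : ℝ) (hk : 0 < k)
    (p q η ζ : Fin n → ℝ)
    (hp : ∀ i, 0 < p i) (hqp : ∀ i, 0 < q i - p i)
    (hη : ∀ i, 0 < η i) (hζ : ∀ i, 0 ≤ ζ i)
    (φ : Fin n → ℝ) (hφ : ∀ i, 0 < φ i) :
    betaSecond n k p q η ζ φ ≤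
      betaK n k φ * ∏ i, Real.exp (-((η i)^k)/k) *
        F1k k (q i - p i) (q i) ((η i)^k/k + (ζ i)^k/(η i)^k) := by
  obtain ⟨m, rfl⟩ : ∃ m, n = m + 2 := ⟨n - 2, by omega⟩
  clear hn
  have hSeq : simplexInt (m+2) = Sx (m+1) 1 := rfl
  have hSmeas : MeasurableSet (simplexInt (m+2)) := hSeq ▸ measurableSet_Sx (m+1) 1
  -- basic facts about bary on the simplex
  have hbary_pos : ∀ t ∈ simplexInt (m+2), ∀ i, 0 < bary (m+2) t i := by
    intro t ht i
    unfold bary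
    split_ifs with h
    · exact ht.1 _
    · have := ht.2; linarith
  have hbary_le : ∀ t ∈ simplexInt (m+2), ∀ i, bary (m+2) t i ≤ 1 := by
    intro t ht i
    unfold bary
    split_ifs with h
    · have h1 : t ⟨(i:ℕ), h⟩ ≤ ∑ j, t j :=
        Finset.single_le_sum (fun j _ => (ht.1 j).le) (Finset.mem_univ _)
      have := ht.2; linarith
    · have : 0 ≤ ∑ j, t j := Finset.sum_nonneg fun j _ => (ht.1 j).le
      linarith
  have hbary_cast : ∀ (t : Fin (m+1) → ℝ) (j : Fin (m+1)),
      bary (m+2) t (Fin.castSucc j) = t j := by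
    intro t j
    have h : ((Fin.castSucc j : Fin (m+2)) : ℕ) < m + 2 - 1 := by
      simp [Fin.coe_castSucc]; omega
    unfold bary
    rw [dif_pos h]
    exact congrArg t (Fin.ext (by simp))
  have hbary_last : ∀ t : Fin (m+1) → ℝ,
      bary (m+2) t (Fin.last (m+1)) = 1 - ∑ j, t j := by
    intro t
    unfold bary
    rw [dif_neg (by simp)]
    rfl
  -- split the product
  have hprod : ∀ t : Fin (m+1) → ℝ, (∏ i, bary (m+2) t i ^ (φ i / k - 1)) =
      (∏ j : Fin (m+1), t j ^ (φ (Fin.castSucc j) / k - 1)) *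
        (1 - ∑ j, t j) ^ (φ (Fin.last (m+1)) / k - 1) := by
    intro t
    rw [Fin.prod_univ_castSucc (f := fun i => bary (m+2) t i ^ (φ i / k - 1))]
    congr 1
    · exact Finset.prod_congr rfl fun j _ => by rw [hbary_cast]
    · rw [hbary_last]
  -- integrability of the plain Dirichlet integrand
  set G : (Fin (m+1) → ℝ) → ℝ := fun t => ∏ i, bary (m+2) t i ^ (φ i / k - 1) with hGdef
  have hGmeas : Measurable G := by
    apply Finset.measurable_prod
    intro i _
    apply Measurable.pow_const
    unfold bary
    by_cases h : (i : ℕ) < m + 2 - 1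
    · simp only [dif_pos h]; exact measurable_pi_apply _
    · simp only [dif_neg h]; fun_prop
  have hGae : 0 ≤ᵐ[volume.restrict (simplexInt (m+2))] G := by
    filter_upwards [ae_restrict_mem hSmeas] with t ht
    exact Finset.prod_nonneg fun i _ => (Real.rpow_pos_of_pos (hbary_pos t ht i) _).le
  have hGint : IntegrableOn G (simplexInt (m+2)) := by
    refine ⟨hGmeas.aestronglyMeasurable, ?_⟩
    rw [hasFiniteIntegral_iff_ofReal hGae]
    obtain ⟨C, hCne, hC⟩ := dirichlet_bound (m+1) (fun j => φ (Fin.castSucc j) / k)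
      (fun j => by have := hφ (Fin.castSucc j); positivity)
      (φ (Fin.last (m+1)) / k) (by have := hφ (Fin.last (m+1)); positivity)
    have h1 := hC 1 one_pos
    have heq : ∫⁻ t in simplexInt (m+2), ENNReal.ofReal (G t) =
        ∫⁻ t in Sx (m+1) 1, ENNReal.ofReal
          ((∏ j, t j ^ (φ (Fin.castSucc j) / k - 1)) *
            (1 - ∑ j, t j) ^ (φ (Fin.last (m+1)) / k - 1)) := by
      rw [hSeq]
      apply setLIntegral_congr_fun (measurableSet_Sx _ _)
      intro t _
      rw [hGdef]
      exact congrArg ENNReal.ofReal (hprod t)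
    rw [heq]
    exact lt_of_le_of_lt h1 (by
      exact ENNReal.mul_lt_top ENNReal.ofReal_lt_top hCne.lt_top)
  -- the constants
  set C : Fin (m+2) → ℝ := fun i => Real.exp (-((η i)^k)/k) *
    F1k k (q i - p i) (q i) ((η i)^k/k + (ζ i)^k/(η i)^k) with hCdef
  have hC0 : ∀ i, 0 ≤ C i := by
    intro i
    apply mul_nonneg (Real.exp_nonneg _)
    apply F1k_nonneg hk (hqp i)
    rw [show q i - (q i - p i) = p i by ring]
    exact hp i
  -- pointwise bound on the simplex
  have hpt : ∀ t ∈ simplexInt (m+2),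
      (∏ i, (bary (m+2) t i ^ (φ i / k - 1) *
        F1k k (p i) (q i) (-((η i)^k)/(k * bary (m+2) t i) -
          (ζ i)^k * bary (m+2) t i / (η i)^k))) ≤ G t * ∏ i, C i := by
    intro t ht
    rw [hGdef, ← Finset.prod_mul_distrib]
    apply Finset.prod_le_prod
    · intro i _
      exact mul_nonneg (Real.rpow_pos_of_pos (hbary_pos t ht i) _).le
        (F1k_nonneg hk (hp i) (hqp i) _)
    · intro i _
      apply mul_le_mul_of_nonneg_left _ (Real.rpow_pos_of_pos (hbary_pos t ht i) _).le
      set bi := bary (m+2) t i with hbi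
      have hbi0 : 0 < bi := hbary_pos t ht i
      have hbi1 : bi ≤ 1 := hbary_le t ht i
      have hηk : 0 < (η i)^k := Real.rpow_pos_of_pos (hη i) k
      have hζk : 0 ≤ (ζ i)^k := Real.rpow_nonneg (hζ i) k
      have harg : -((η i)^k)/(k * bi) - (ζ i)^k * bi / (η i)^k =
          -((η i)^k/(k * bi) + (ζ i)^k * bi / (η i)^k) := by ring
      rw [harg, hCdef]
      have hbound := F1k_bound (k := k) (a := p i) (b := q i)
        (x := (η i)^k/(k * bi) + (ζ i)^k * bi / (η i)^k)
        (c := (η i)^k/k) (m := (η i)^k/k + (ζ i)^k/(η i)^k)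
        hk (hp i) (hqp i) (by positivity) ?_ (le_add_of_nonneg_right (by positivity))
      · calc F1k k (p i) (q i) (-((η i)^k/(k * bi) + (ζ i)^k * bi / (η i)^k))
            ≤ Real.exp (-((η i)^k/k)) *
              F1k k (q i - p i) (q i) ((η i)^k/k + (ζ i)^k/(η i)^k) := hbound
          _ = Real.exp (-((η i)^k)/k) *
              F1k k (q i - p i) (q i) ((η i)^k/k + (ζ i)^k/(η i)^k) := by
                rw [neg_div]
      · have h1 : (η i)^k/k ≤ (η i)^k/(k * bi) := by
          apply div_le_div_of_nonneg_left hηk.le (by positivity)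
          calc k * bi ≤ k * 1 := by
                exact mul_le_mul_of_nonneg_left hbi1 hk.le
            _ = k := mul_one k
        have h2 : 0 ≤ (ζ i)^k * bi / (η i)^k := by positivity
        linarith
  -- assemble
  unfold betaSecond betaK
  have hconst : (0:ℝ) ≤ 1 / k ^ (m + 2 - 1) := by positivity
  have hmono : (∫ t in simplexInt (m+2),
      ∏ i, (bary (m+2) t i ^ (φ i / k - 1) *
        F1k k (p i) (q i) (-((η i)^k)/(k * bary (m+2) t i) -
          (ζ i)^k * bary (m+2) t i / (η i)^k))) ≤
      (∫ t in simplexInt (m+2), G t) * ∏ i, C i := by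
    rw [← MeasureTheory.integral_mul_const]
    apply integral_mono_of_nonneg (μ := volume.restrict (simplexInt (m+2)))
    · filter_upwards [ae_restrict_mem hSmeas] with t ht
      exact Finset.prod_nonneg fun i _ =>
        mul_nonneg (Real.rpow_pos_of_pos (hbary_pos t ht i) _).le
          (F1k_nonneg hk (hp i) (hqp i) _)
    · exact hGint.mul_const _
    · filter_upwards [ae_restrict_mem hSmeas] with t ht
      exact hpt t ht
  calc 1 / k ^ (m + 2 - 1) * ∫ t in simplexInt (m+2),
        ∏ i, (bary (m+2) t i ^ (φ i / k - 1) *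
          F1k k (p i) (q i) (-((η i)^k)/(k * bary (m+2) t i) -
            (ζ i)^k * bary (m+2) t i / (η i)^k))
      ≤ 1 / k ^ (m + 2 - 1) * ((∫ t in simplexInt (m+2), G t) * ∏ i, C i) :=
        mul_le_mul_of_nonneg_left hmono hconst
    _ = (1 / k ^ (m + 2 - 1) * ∫ t in simplexInt (m+2), G t) * ∏ i, C i := by ring
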